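/- Let C > 0 and τ > 0, and define f : (0,∞) → ℝ by f(x) = −(1/τ) log x. Then for all x, y ∈ [exp(−Cτ), 1]: (f(x) − f(y))² ≤ (8 exp(2Cτ)/τ) · ( (f(x) + f(y))/2 − f((x+y)/2) ). -/
import Mathlib


/-- Lemma 4 of the paper: for `f(x) = −(1/τ) log x` on `[exp(−Cτ), 1]`,
`(f(x) − f(y))² ≤ (8 exp(2Cτ)/τ) ((f(x)+f(y))/2 − f((x+y)/2))`. -/
theorem sq_sub_le_strong_convexity_gap
    (C τ : ℝ) (hC : 0 < C) (hτ : 0 < τ)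
    (f : ℝ → ℝ) (hf : ∀ x, f x = -(1 / τ) * Real.log x)
    (x y : ℝ) (hx : x ∈ Set.Icc (Real.exp (-(C * τ))) 1)
    (hy : y ∈ Set.Icc (Real.exp (-(C * τ))) 1) :
    (f x - f y) ^ 2 ≤
      (8 * Real.exp (2 * C * τ) / τ) * ((f x + f y) / 2 - f ((x + y) / 2)) := by
  wlog hle : y ≤ x with H
  · have h := H C τ hC hτ f hf y x hy hx (le_of_not_ge hle)
    have e1 : (f x - f y) ^ 2 = (f y - f x) ^ 2 := by ring
    have e2 : f x + f y = f y + f x := by ring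
    rw [e1, e2, add_comm x y]
    exact h
  obtain ⟨hx1, hx2⟩ := hx
  obtain ⟨hy1, hy2⟩ := hy
  have ha : (0:ℝ) < Real.exp (-(C * τ)) := Real.exp_pos _
  have hx0 : 0 < x := lt_of_lt_of_le ha hx1
  have hy0 : 0 < y := lt_of_lt_of_le ha hy1
  have hm0 : 0 < (x + y) / 2 := by linarith
  set E : ℝ := Real.exp (C * τ) with hEdef
  have hE0 : 0 < E := Real.exp_pos _
  have hEinv : Real.exp (-(C * τ)) = E⁻¹ := Real.exp_neg _
  have hE2 : Real.exp (2 * C * τ) = E ^ 2 := by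
    rw [sq, ← Real.exp_add]; ring_nf
  -- Step A : log x - log y ≤ E * (x - y)
  have hA : Real.log x - Real.log y ≤ E * (x - y) := by
    have h1 : Real.log x - Real.log y = Real.log (x / y) := by
      rw [Real.log_div hx0.ne' hy0.ne']
    have h2 : Real.log (x / y) ≤ x / y - 1 :=
      Real.log_le_sub_one_of_pos (by positivity)
    have h3 : x / y - 1 ≤ E * (x - y) := by
      rw [div_sub_one hy0.ne', div_le_iff₀ hy0]
      have hyE : 1 ≤ y * E := by
        rw [hEinv] at hy1
        calc (1:ℝ) = E⁻¹ * E := by field_simp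
        _ ≤ y * E := by gcongr
      nlinarith [sub_nonneg.mpr hle]
    linarith
  have hD0 : 0 ≤ Real.log x - Real.log y :=
    sub_nonneg.mpr (Real.log_le_log hy0 hle)
  -- Step B : (x - y)^2 / 4 ≤ 2 log((x+y)/2) - log x - log y
  have hB : (x - y) ^ 2 ≤ 4 * (2 * Real.log ((x + y) / 2) - Real.log x - Real.log y) := by
    set t : ℝ := ((x + y) / 2) ^ 2 / (x * y) with htdef
    have hxy : 0 < x * y := mul_pos hx0 hy0
    have ht0 : 0 < t := by positivity
    have hlogt : Real.log t = 2 * Real.log ((x + y) / 2) - Real.log x - Real.log y := by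
      rw [htdef, Real.log_div (by positivity) hxy.ne', Real.log_mul hx0.ne' hy0.ne',
        Real.log_pow]
      push_cast; ring
    have hlb : 1 - 1 / t ≤ Real.log t := by
      have h := Real.log_le_sub_one_of_pos (x := 1 / t) (by positivity)
      rw [Real.log_div one_ne_zero ht0.ne', Real.log_one] at h
      linarith
    have h1 : 1 - 1 / t = (x - y) ^ 2 / (x + y) ^ 2 := by
      rw [htdef]
      field_simp
      ring
    have h2 : (x - y) ^ 2 / 4 ≤ (x - y) ^ 2 / (x + y) ^ 2 := by
      have hsum : (x + y) ^ 2 ≤ 4 := by nlinarith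
      gcongr
    rw [← hlogt]
    linarith
  -- key inequality
  have key : (Real.log x - Real.log y) ^ 2 ≤
      4 * E ^ 2 * (2 * Real.log ((x + y) / 2) - Real.log x - Real.log y) := by
    have hsq : (Real.log x - Real.log y) ^ 2 ≤ E ^ 2 * (x - y) ^ 2 := by
      nlinarith [mul_le_mul hA hA hD0 (mul_nonneg hE0.le (sub_nonneg.mpr hle))]
    nlinarith [sq_nonneg E, mul_le_mul_of_nonneg_left hB (sq_nonneg E)]
  rw [hf x, hf y, hf ((x + y) / 2), hE2]
  have hτ2 : (0:ℝ) < τ ^ 2 := by positivity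
  calc (-(1 / τ) * Real.log x - -(1 / τ) * Real.log y) ^ 2
      = (Real.log x - Real.log y) ^ 2 / τ ^ 2 := by field_simp; ring
    _ ≤ (4 * E ^ 2 * (2 * Real.log ((x + y) / 2) - Real.log x - Real.log y)) / τ ^ 2 := by
        gcongr
    _ = 8 * E ^ 2 / τ * ((-(1 / τ) * Real.log x + -(1 / τ) * Real.log y) / 2 -
          -(1 / τ) * Real.log ((x + y) / 2)) := by field_simp; ring
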